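/- Let u, v be unit vectors in a complex Hilbert space H and let P_u, P_v be the orthogonal projections onto ℂu and ℂv. Then the operator norm of the commutator satisfies ‖P_uP_v − P_vP_u‖² = δ(u,v)²(1 − δ(u,v)²) = |⟨u,v⟩|²(1 − |⟨u,v⟩|²), where δ(u,v) = √(1 − |⟨u,v⟩|²). -/

import Mathlib

set_option maxRecDepth 8000
open scoped ComplexConjugate

/-- The orthogonal projection of `H` onto the line `ℂ • u` spanned by a unit
vector `u`, as a continuous linear map `H →L[ℂ] H`: `P u f = ⟪u, f⟫ • u`. -/
noncomputable def rankOneProj {H : Type*} [NormedAddCommGroup H] [InnerProductSpace ℂ H]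
    (u : H) : H →L[ℂ] H :=
  (innerSL ℂ u).smulRight u

private lemma key_calc (a b c : ℂ) :
    ‖b * c‖ ^ 2 - 2 * Complex.re ((starRingEnd ℂ) (b * c) * (a * (starRingEnd ℂ) c * c))
        + ‖a * (starRingEnd ℂ) c‖ ^ 2
      = ‖c‖ ^ 2 * (‖a - c * b‖ ^ 2 + (1 - ‖c‖ ^ 2) * ‖b‖ ^ 2) := by
  simp only [Complex.sq_norm, Complex.normSq_apply, Complex.mul_re,
    Complex.mul_im, Complex.conj_re, Complex.conj_im, Complex.sub_re, Complex.sub_im]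
  ring

/-- For unit vectors `u, v`, the operator norm of the
commutator satisfies
`‖P_uP_v − P_vP_u‖² = δ(u,v)²(1 − δ(u,v)²) = |⟨u,v⟩|²(1 − |⟨u,v⟩|²)`,
where `δ(u,v) = √(1 − |⟨u,v⟩|²)`. -/
theorem norm_commutator_projections {H : Type*} [NormedAddCommGroup H]
    [InnerProductSpace ℂ H] (u v : H) (hu : ‖u‖ = 1) (hv : ‖v‖ = 1) :
    ‖(rankOneProj u).comp (rankOneProj v) - (rankOneProj v).comp (rankOneProj u)‖ ^ 2
        = Real.sqrt (1 - ‖(inner ℂ u v : ℂ)‖ ^ 2) ^ 2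
            * (1 - Real.sqrt (1 - ‖(inner ℂ u v : ℂ)‖ ^ 2) ^ 2) ∧
    ‖(rankOneProj u).comp (rankOneProj v) - (rankOneProj v).comp (rankOneProj u)‖ ^ 2
        = ‖(inner ℂ u v : ℂ)‖ ^ 2 * (1 - ‖(inner ℂ u v : ℂ)‖ ^ 2) := by
  set c : ℂ := inner ℂ u v with hc
  set T := (rankOneProj u).comp (rankOneProj v) - (rankOneProj v).comp (rankOneProj u) with hT
  have huu : (inner ℂ u u : ℂ) = 1 := by
    rw [inner_self_eq_norm_sq_to_K, hu]; norm_num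
  have hvv : (inner ℂ v v : ℂ) = 1 := by
    rw [inner_self_eq_norm_sq_to_K, hv]; norm_num
  have hvu : (inner ℂ v u : ℂ) = (starRingEnd ℂ) c := by
    rw [hc, inner_conj_symm]
  have hcn : ‖c‖ ≤ 1 := by
    have := norm_inner_le_norm (𝕜 := ℂ) u v
    simpa [hu, hv, ← hc] using this
  have hc1 : (0:ℝ) ≤ 1 - ‖c‖ ^ 2 := by nlinarith [norm_nonneg c]
  have hK : (0:ℝ) ≤ ‖c‖ ^ 2 * (1 - ‖c‖ ^ 2) := by positivity
  set w : H := u - ((starRingEnd ℂ) c) • v with hw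
  have hwf : ∀ f : H, (inner ℂ w f : ℂ) = inner ℂ u f - c * inner ℂ v f := by
    intro f; simp [hw, inner_sub_left, inner_smul_left, mul_comm]
  have hwv : (inner ℂ w v : ℂ) = 0 := by
    rw [hwf, hvv, ← hc]; ring
  have hwn : ‖w‖ ^ 2 = 1 - ‖c‖ ^ 2 := by
    rw [hw, norm_sub_sq (𝕜 := ℂ)]
    rw [inner_smul_right, ← hc, norm_smul, hu, hv]
    rw [Complex.conj_mul']
    simp [Complex.normSq_eq_norm_sq, ← Complex.ofReal_pow]
    ring
  have hTf : ∀ f : H, T f = ((inner ℂ v f : ℂ) * c) • u - ((inner ℂ u f : ℂ) * (starRingEnd ℂ) c) • v := by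
    intro f
    simp [hT, rankOneProj, inner_smul_right, smul_smul, ← hc, hvu]
  have hkey : ∀ f : H, ‖T f‖ ^ 2
      = ‖c‖ ^ 2 * (‖(inner ℂ w f : ℂ)‖ ^ 2 + (1 - ‖c‖ ^ 2) * ‖(inner ℂ v f : ℂ)‖ ^ 2) := by
    intro f
    rw [hTf f, norm_sub_sq (𝕜 := ℂ), inner_smul_left, inner_smul_right, norm_smul,
      norm_smul, hu, hv, mul_one, mul_one, ← hc, hwf f]
    exact key_calc (inner ℂ u f) (inner ℂ v f) c
  have hbound : ∀ f : H, ‖T f‖ ≤ Real.sqrt (‖c‖ ^ 2 * (1 - ‖c‖ ^ 2)) * ‖f‖ := by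
    intro f
    set b : ℂ := inner ℂ v f with hb
    have hfv : (inner ℂ f v : ℂ) = (starRingEnd ℂ) b := by rw [hb, inner_conj_symm]
    set g : H := f - b • v with hg
    have hgn : ‖g‖ ^ 2 = ‖f‖ ^ 2 - ‖b‖ ^ 2 := by
      rw [hg, norm_sub_sq (𝕜 := ℂ), inner_smul_right, hfv, norm_smul, hv]
      rw [Complex.mul_conj']
      simp [RCLike.re_to_complex, Complex.normSq_eq_norm_sq,
        ← Complex.ofReal_pow]
      ring
    have hwg : (inner ℂ w f : ℂ) = inner ℂ w g := by
      simp [hg, inner_sub_right, inner_smul_right, hwv]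
    have h1 : ‖(inner ℂ w f : ℂ)‖ ^ 2 ≤ (1 - ‖c‖ ^ 2) * (‖f‖ ^ 2 - ‖b‖ ^ 2) := by
      rw [hwg, ← hwn, ← hgn]
      calc ‖(inner ℂ w g : ℂ)‖ ^ 2 ≤ (‖w‖ * ‖g‖) ^ 2 := by
            apply pow_le_pow_left₀ (norm_nonneg _) (norm_inner_le_norm w g)
        _ = ‖w‖ ^ 2 * ‖g‖ ^ 2 := by ring
    have hbf : ‖b‖ ≤ ‖f‖ := by
      have := norm_inner_le_norm (𝕜 := ℂ) v f
      simpa [hv, ← hb] using this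
    have h2 : ‖T f‖ ^ 2 ≤ ‖c‖ ^ 2 * (1 - ‖c‖ ^ 2) * ‖f‖ ^ 2 := by
      rw [hkey f, ← hb]
      nlinarith [sq_nonneg ‖c‖, norm_nonneg c, sq_nonneg ‖b‖]
    calc ‖T f‖ = Real.sqrt (‖T f‖ ^ 2) := (Real.sqrt_sq (norm_nonneg _)).symm
      _ ≤ Real.sqrt (‖c‖ ^ 2 * (1 - ‖c‖ ^ 2) * ‖f‖ ^ 2) := Real.sqrt_le_sqrt h2
      _ = Real.sqrt (‖c‖ ^ 2 * (1 - ‖c‖ ^ 2)) * ‖f‖ := by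
          rw [Real.sqrt_mul hK, Real.sqrt_sq (norm_nonneg f)]
  have hTv : ‖T v‖ = Real.sqrt (‖c‖ ^ 2 * (1 - ‖c‖ ^ 2)) := by
    have h := hkey v
    rw [hwv, hvv] at h
    simp only [norm_zero, norm_one] at h
    rw [← Real.sqrt_sq (norm_nonneg (T v)), h]
    ring_nf
  have hTnorm : ‖T‖ = Real.sqrt (‖c‖ ^ 2 * (1 - ‖c‖ ^ 2)) := by
    refine le_antisymm (T.opNorm_le_bound (Real.sqrt_nonneg _) hbound) ?_
    calc Real.sqrt (‖c‖ ^ 2 * (1 - ‖c‖ ^ 2)) = ‖T v‖ := hTv.symm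
      _ ≤ ‖T‖ * ‖v‖ := T.le_opNorm v
      _ = ‖T‖ := by rw [hv, mul_one]
  have hT2 : ‖T‖ ^ 2 = ‖c‖ ^ 2 * (1 - ‖c‖ ^ 2) := by
    rw [hTnorm, Real.sq_sqrt hK]
  refine ⟨?_, hT2⟩
  rw [hT2, Real.sq_sqrt hc1]
  ring
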